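/- Let M be a 2×2 real matrix with entries M11, M12, M21, M22, let D1 > 0, D2 > 0, and assume det M > 0. Then there exists a real k > 0 with det M(k) < 0 (where M(k) = M − k²·diag(D1, D2)) if and only if M11·D2 + M22·D1 > 2·√(D1·D2·det M). -/

import Mathlib

/-- Let `M` be a 2×2 real matrix with entries `M11, M12, M21, M22`, `D1 > 0`, `D2 > 0` and
`det M > 0`. There exists `k > 0` with `det (M − k²·diag(D1,D2)) < 0` if and only if
`M11·D2 + M22·D1 > 2·√(D1·D2·det M)`. -/
theorem turing_instability_iff (M11 M12 M21 M22 D1 D2 : ℝ)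
    (hD1 : 0 < D1) (hD2 : 0 < D2)
    (hdet : 0 < (!![M11, M12; M21, M22] : Matrix (Fin 2) (Fin 2) ℝ).det) :
    (∃ k : ℝ, 0 < k ∧
        (!![M11 - D1 * k ^ 2, M12; M21, M22 - D2 * k ^ 2] : Matrix (Fin 2) (Fin 2) ℝ).det < 0)
      ↔ M11 * D2 + M22 * D1 >
          2 * Real.sqrt (D1 * D2 * (!![M11, M12; M21, M22] : Matrix (Fin 2) (Fin 2) ℝ).det) := by
  simp only [Matrix.det_fin_two_of] at *
  set d : ℝ := M11 * M22 - M12 * M21 with hd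
  set b : ℝ := M11 * D2 + M22 * D1 with hb
  set s : ℝ := Real.sqrt (D1 * D2 * d) with hs
  have hs0 : 0 ≤ s := Real.sqrt_nonneg _
  have hs2 : s ^ 2 = D1 * D2 * d := Real.sq_sqrt (by positivity)
  constructor
  · rintro ⟨k, hk, hlt⟩
    have hx : 0 < k ^ 2 := by positivity
    have hlt' : D1 * D2 * (k ^ 2) ^ 2 - b * k ^ 2 + d < 0 := by nlinarith [hlt]
    have hAM : D1 * D2 * (k ^ 2) ^ 2 + d ≥ 2 * s * k ^ 2 := by
      nlinarith [sq_nonneg (k ^ 2 * s - d), hs2, hdet]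
    have hkey : (b - 2 * s) * k ^ 2 > 0 := by nlinarith
    by_contra hcon
    push_neg at hcon
    have : (b - 2 * s) * k ^ 2 ≤ 0 :=
      mul_nonpos_of_nonpos_of_nonneg (by linarith) hx.le
    linarith
  · intro hbs
    have hb0 : 0 < b := lt_of_le_of_lt (by linarith) hbs
    set x : ℝ := b / (2 * (D1 * D2)) with hxdef
    have hx0 : 0 < x := by positivity
    refine ⟨Real.sqrt x, Real.sqrt_pos.mpr hx0, ?_⟩
    have hsq : Real.sqrt x ^ 2 = x := Real.sq_sqrt hx0.le
    rw [hsq]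
    have hxe : 2 * (D1 * D2) * x = b := by
      rw [hxdef]
      field_simp
    nlinarith [mul_pos hD1 hD2, sq_nonneg (b - 2 * s)]
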